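/- Let q be a real number with |q| > 1, n ≥ 1, and ε ∈ {+1, −1}. On the Hilbert space ℓ²(ℕⁿ) with standard orthonormal basis {e_{k₀,…,k_{n−1}} : (k₀,…,k_{n−1}) ∈ ℕⁿ}, there exist bounded operators X₀, X₁, …, Xₙ determined by: X₀ e_{k₀,…,k_{n−1}} = ε q^{−(k₀+⋯+k_{n−1})} e_{k₀,…,k_{n−1}}, and for 1 ≤ i ≤ n, X_i e_{k₀,…,k_{n−1}} = (1 − q^{−2k_{i−1}})^{1/2} q^{−(k_i+⋯+k_{n−1})} e_{k₀,…,k_{i−1}−1,…,k_{n−1}} (interpreted as 0 when k_{i−1} = 0). Moreover X₀ is self-adjoint, the adjoint of X_i acts by X_i* e_{k₀,…,k_{n−1}} = (1 − q^{−2(k_{i−1}+1)})^{1/2} q^{−(k_i+⋯+k_{n−1})} e_{k₀,…,k_{i−1}+1,…,k_{n−1}}, and the operators X₀, …, Xₙ satisfy the defining relations of S_q^{2n}: X_i X_j = q X_j X_i for 0 ≤ i < j ≤ n; X_i* X_j = q X_j X_i* for i ≠ j; X_i X_i* − X_i* X_i = (1 − q^{−2}) S_{i−1} where S₀ := X₀²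 and S_i := S_{i−1} + X_i* X_i; and Sₙ = 1. -/

import Mathlib

/-- The Hilbert space `ℓ²(ℕⁿ)`. -/
noncomputable abbrev ellTwo (n : ℕ) : Type := lp (fun _ : Fin n → ℕ => ℂ) 2

/-- The standard basis vector `e_{k₀,…,k_{n−1}}` of `ℓ²(ℕⁿ)`. -/
noncomputable def basisVec (n : ℕ) (k : Fin n → ℕ) : ellTwo n := lp.single 2 k (1 : ℂ)

namespace EvenSphereAux

open Finset Function
open scoped ENNReal ComplexConjugate InnerProductSpace

variable {n : ℕ}

lemma toReal_two : ((2 : ℝ≥0∞)).toReal = (2 : ℝ) := by norm_num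

lemma key_sum_bound (w : (Fin n → ℕ) → ℝ) (τ : (Fin n → ℕ) → (Fin n → ℕ))
    (hw : ∀ m, |w m| ≤ 1) (hinj : Set.InjOn τ {m | w m ≠ 0}) (f : ellTwo n)
    (s : Finset (Fin n → ℕ)) :
    ∑ m ∈ s, ‖(w m : ℂ) * f (τ m)‖ ^ (2 : ℝ) ≤ ‖f‖ ^ (2 : ℝ) := by
  have h2 : (0 : ℝ) < (2 : ℝ≥0∞).toReal := by norm_num
  have hf2 : ‖f‖ ^ (2 : ℝ) = ∑' m, ‖f m‖ ^ (2 : ℝ) := by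
    have := lp.norm_rpow_eq_tsum (p := 2) h2 f
    rw [toReal_two] at this
    exact this
  have hsummable : Summable (fun m => ‖f m‖ ^ (2 : ℝ)) := by
    have := (lp.memℓp f).summable h2
    rwa [toReal_two] at this
  rw [hf2]
  set s' := s.filter (fun m => w m ≠ 0) with hs'
  have step1 : ∑ m ∈ s, ‖(w m : ℂ) * f (τ m)‖ ^ (2 : ℝ)
      ≤ ∑ m ∈ s', ‖f (τ m)‖ ^ (2 : ℝ) := by
    rw [← Finset.sum_filter_add_sum_filter_not s (fun m => w m ≠ 0)]
    have hz : ∑ m ∈ s.filter (fun m => ¬ w m ≠ 0), ‖(w m : ℂ) * f (τ m)‖ ^ (2 : ℝ) = 0 := by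
      apply Finset.sum_eq_zero
      intro m hm
      simp only [Finset.mem_filter, not_not] at hm
      rw [hm.2]
      simp [Real.rpow_two]
    rw [hz, add_zero]
    apply Finset.sum_le_sum
    intro m _
    have h1 : ‖(w m : ℂ) * f (τ m)‖ ≤ ‖f (τ m)‖ := by
      rw [norm_mul, Complex.norm_real, Real.norm_eq_abs]
      calc |w m| * ‖f (τ m)‖ ≤ 1 * ‖f (τ m)‖ := by
            apply mul_le_mul_of_nonneg_right (hw m) (norm_nonneg _)
        _ = ‖f (τ m)‖ := one_mul _
    exact Real.rpow_le_rpow (norm_nonneg _) h1 (by norm_num)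
  have step2 : ∑ m ∈ s', ‖f (τ m)‖ ^ (2 : ℝ)
      = ∑ k ∈ s'.image τ, ‖f k‖ ^ (2 : ℝ) := by
    rw [Finset.sum_image]
    intro a ha b hb hab
    exact hinj (by simpa [hs'] using (Finset.mem_filter.mp ha).2)
      (by simpa [hs'] using (Finset.mem_filter.mp hb).2) hab
  have step3 : ∑ k ∈ s'.image τ, ‖f k‖ ^ (2 : ℝ) ≤ ∑' m, ‖f m‖ ^ (2 : ℝ) := by
    exact hsummable.sum_le_tsum _ (fun m _ => Real.rpow_nonneg (norm_nonneg _) _)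
  linarith


lemma memℓp_wop (w : (Fin n → ℕ) → ℝ) (τ : (Fin n → ℕ) → (Fin n → ℕ))
    (hw : ∀ m, |w m| ≤ 1) (hinj : Set.InjOn τ {m | w m ≠ 0}) (f : ellTwo n) :
    Memℓp (fun m => (w m : ℂ) * f (τ m)) 2 := by
  apply memℓp_gen' (C := ‖f‖ ^ (2 : ℝ))
  intro s
  have := key_sum_bound w τ hw hinj f s
  simpa [toReal_two] using this

/-- The weighted composition operator. -/
noncomputable def wop (w : (Fin n → ℕ) → ℝ) (τ : (Fin n → ℕ) → (Fin n → ℕ))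
    (hw : ∀ m, |w m| ≤ 1) (hinj : Set.InjOn τ {m | w m ≠ 0}) :
    ellTwo n →L[ℂ] ellTwo n := by
  refine LinearMap.mkContinuous
    { toFun := fun f => ⟨fun m => (w m : ℂ) * f (τ m), memℓp_wop w τ hw hinj f⟩
      map_add' := ?_
      map_smul' := ?_ } 1 ?_
  · intro f g
    apply lp.ext
    funext m
    simp [lp.coeFn_add, mul_add]
    rfl
  · intro c f
    apply lp.ext
    funext m
    simp [lp.coeFn_smul]
    ring
  · intro f
    rw [one_mul]
    apply lp.norm_le_of_forall_sum_le (by norm_num : (0:ℝ) < (2:ℝ≥0∞).toReal) (norm_nonneg f)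
    intro s
    have := key_sum_bound w τ hw hinj f s
    have h2 : ‖f‖ ^ ((2:ℝ≥0∞)).toReal = ‖f‖ ^ (2:ℝ) := by rw [toReal_two]
    rw [h2]
    simpa [toReal_two] using this

@[simp] lemma wop_apply (w : (Fin n → ℕ) → ℝ) (τ : (Fin n → ℕ) → (Fin n → ℕ))
    (hw : ∀ m, |w m| ≤ 1) (hinj : Set.InjOn τ {m | w m ≠ 0}) (f : ellTwo n)
    (m : Fin n → ℕ) :
    (wop w τ hw hinj f) m = (w m : ℂ) * f (τ m) := rfl


lemma op_ext {A B : ellTwo n →L[ℂ] ellTwo n}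
    (h : ∀ (f : ellTwo n) (m : Fin n → ℕ), (A f) m = (B f) m) : A = B := by
  ext f m
  exact h f m

lemma inner_lp (f g : ellTwo n) : ⟪f, g⟫_ℂ = ∑' m, conj (f m) * g m := by
  rw [lp.inner_eq_tsum]
  congr 1; funext m; exact RCLike.inner_apply' _ _


def sumAll (m : Fin n → ℕ) : ℤ := ∑ j, (m j : ℤ)
def sumGt (i : Fin n) (m : Fin n → ℕ) : ℤ :=
  ∑ j ∈ Finset.univ.filter (fun j => i < j), (m j : ℤ)
def sumGe (i : Fin (n+1)) (m : Fin n → ℕ) : ℤ :=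
  ∑ j ∈ Finset.univ.filter (fun j : Fin n => (i : ℕ) ≤ (j : ℕ)), (m j : ℤ)

lemma sumAll_nonneg (m : Fin n → ℕ) : 0 ≤ sumAll m :=
  Finset.sum_nonneg fun _ _ => Int.natCast_nonneg _
lemma sumGt_nonneg (i : Fin n) (m : Fin n → ℕ) : 0 ≤ sumGt i m :=
  Finset.sum_nonneg fun _ _ => Int.natCast_nonneg _
lemma sumGe_nonneg (i : Fin (n+1)) (m : Fin n → ℕ) : 0 ≤ sumGe i m :=
  Finset.sum_nonneg fun _ _ => Int.natCast_nonneg _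

lemma sum_update_mem (s : Finset (Fin n)) {i : Fin n} (h : i ∈ s) (m : Fin n → ℕ) (v : ℕ) :
    ∑ j ∈ s, ((Function.update m i v) j : ℤ) = ∑ j ∈ s, (m j : ℤ) + (v : ℤ) - (m i : ℤ) := by
  have hc : (fun j => ((Function.update m i v) j : ℤ))
      = Function.update (fun j => (m j : ℤ)) i (v : ℤ) := by
    funext j
    by_cases hj : j = i
    · subst hj; simp
    · simp [Function.update_of_ne hj]
  rw [hc, Finset.sum_update_of_mem h,
    Finset.sum_eq_add_sum_sdiff_singleton_of_mem h (fun j => (m j : ℤ))]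
  ring

lemma sum_update_not_mem (s : Finset (Fin n)) {i : Fin n} (h : i ∉ s) (m : Fin n → ℕ) (v : ℕ) :
    ∑ j ∈ s, ((Function.update m i v) j : ℤ) = ∑ j ∈ s, (m j : ℤ) := by
  apply Finset.sum_congr rfl
  intro j hj
  have : j ≠ i := fun hji => h (hji ▸ hj)
  rw [Function.update_of_ne this]

def upF (i : Fin n) (m : Fin n → ℕ) : Fin n → ℕ := Function.update m i (m i + 1)
def dnF (i : Fin n) (m : Fin n → ℕ) : Fin n → ℕ := Function.update m i (m i - 1)

lemma mem_gtFilter {i j : Fin n} : j ∈ Finset.univ.filter (fun j => i < j) ↔ i < j := by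
  simp

lemma sumAll_upF (j : Fin n) (m : Fin n → ℕ) : sumAll (upF j m) = sumAll m + 1 := by
  unfold sumAll upF
  rw [sum_update_mem _ (Finset.mem_univ j)]
  push_cast; ring

lemma sumAll_dnF {a : Fin n} (m : Fin n → ℕ) (h : m a ≠ 0) :
    sumAll (dnF a m) = sumAll m - 1 := by
  unfold sumAll dnF
  rw [sum_update_mem _ (Finset.mem_univ a)]
  have : ((m a - 1 : ℕ) : ℤ) = (m a : ℤ) - 1 := by
    have := Nat.one_le_iff_ne_zero.mpr h
    omega
  rw [this]; ring

lemma sumGt_upF_of_lt {i j : Fin n} (h : i < j) (m : Fin n → ℕ) :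
    sumGt i (upF j m) = sumGt i m + 1 := by
  unfold sumGt upF
  rw [sum_update_mem _ (mem_gtFilter.mpr h)]
  push_cast; ring

lemma sumGt_upF_of_not_lt {i j : Fin n} (h : ¬ i < j) (m : Fin n → ℕ) :
    sumGt i (upF j m) = sumGt i m := by
  unfold sumGt upF
  exact sum_update_not_mem _ (fun hm => h (mem_gtFilter.mp hm)) _ _

lemma sumGt_dnF_of_lt {i a : Fin n} (h : i < a) (m : Fin n → ℕ) (ha : m a ≠ 0) :
    sumGt i (dnF a m) = sumGt i m - 1 := by
  unfold sumGt dnF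
  rw [sum_update_mem _ (mem_gtFilter.mpr h)]
  have : ((m a - 1 : ℕ) : ℤ) = (m a : ℤ) - 1 := by
    have := Nat.one_le_iff_ne_zero.mpr ha
    omega
  rw [this]; ring

lemma sumGt_dnF_of_not_lt {i a : Fin n} (h : ¬ i < a) (m : Fin n → ℕ) :
    sumGt i (dnF a m) = sumGt i m := by
  unfold sumGt dnF
  exact sum_update_not_mem _ (fun hm => h (mem_gtFilter.mp hm)) _ _

lemma sumGe_zero (m : Fin n → ℕ) : sumGe 0 m = sumAll m := by
  unfold sumGe sumAll
  apply Finset.sum_congr _ (fun _ _ => rfl)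
  apply Finset.filter_true_of_mem
  intro j _
  simp

lemma sumGe_last (m : Fin n → ℕ) : sumGe (Fin.last n) m = 0 := by
  unfold sumGe
  rw [Finset.filter_false_of_mem, Finset.sum_empty]
  intro j _
  simp only [Fin.val_last, not_le]
  exact j.isLt

lemma sumGe_succ (i : Fin n) (m : Fin n → ℕ) : sumGe i.succ m = sumGt i m := by
  unfold sumGe sumGt
  apply Finset.sum_congr _ (fun _ _ => rfl)
  apply Finset.filter_congr
  intro j _
  simp only [Fin.val_succ, Fin.lt_def]
  omega

lemma sumGe_castSucc (i : Fin n) (m : Fin n → ℕ) :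
    sumGe i.castSucc m = (m i : ℤ) + sumGt i m := by
  unfold sumGe sumGt
  have hset : Finset.univ.filter (fun j : Fin n => ((i.castSucc : ℕ) ≤ (j : ℕ)))
      = insert i (Finset.univ.filter (fun j => i < j)) := by
    ext j
    simp only [Finset.mem_filter, Finset.mem_univ, true_and, Finset.mem_insert,
      Fin.coe_castSucc, Fin.lt_def, Fin.ext_iff]
    omega
  rw [hset, Finset.sum_insert]
  simp

section Weights

variable {q : ℝ} (hq : 1 < |q|) {ε : ℝ}

lemma q_ne_zero (hq : 1 < |q|) : q ≠ 0 := by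
  intro h; rw [h] at hq; simp at hq; linarith

lemma abs_q_zpow (q : ℝ) (z : ℤ) : |q ^ z| = |q| ^ z := by
  rcases z with p | p
  · simp [abs_pow]
  · simp [zpow_negSucc, abs_inv, abs_pow]

lemma q_zpow_le_one (hq : 1 < |q|) {z : ℤ} (hz : z ≤ 0) : |q ^ z| ≤ 1 := by
  rw [abs_q_zpow]
  exact zpow_le_one_of_nonpos₀ (le_of_lt hq) hz

lemma q_zpow_even_nonneg (q : ℝ) (u : ℤ) : 0 ≤ q ^ (2 * u) := by
  rw [show (2 : ℤ) * u = u * 2 by ring, zpow_mul]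
  positivity

lemma q_zpow_neg_even_nonneg (q : ℝ) (u : ℤ) : 0 ≤ q ^ (-(2 * u)) := by
  rw [show -(2 * u) = 2 * (-u) by ring]
  exact q_zpow_even_nonneg q (-u)

lemma one_sub_le_one (q : ℝ) (u : ℤ) : 1 - q ^ (-(2 * u)) ≤ 1 :=
  sub_le_self _ (q_zpow_neg_even_nonneg q u)

lemma one_sub_nonneg (hq : 1 < |q|) {u : ℤ} (hu : 0 ≤ u) : 0 ≤ 1 - q ^ (-(2 * u)) := by
  have h1 : q ^ (-(2 * u)) ≤ |q ^ (-(2 * u))| := le_abs_self _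
  have h2 : |q ^ (-(2 * u))| ≤ 1 := q_zpow_le_one hq (by omega)
  linarith

lemma sqrt_factor_mem (hq : 1 < |q|) {u : ℤ} (hu : 0 ≤ u) :
    Real.sqrt (1 - q ^ (-(2 * u))) * Real.sqrt (1 - q ^ (-(2 * u)))
      = 1 - q ^ (-(2 * u)) :=
  Real.mul_self_sqrt (one_sub_nonneg hq hu)

/-- weights -/
noncomputable def w0 (q ε : ℝ) (m : Fin n → ℕ) : ℝ := ε * q ^ (-(sumAll m))
noncomputable def wup (q : ℝ) (i : Fin n) (m : Fin n → ℕ) : ℝ :=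
  Real.sqrt (1 - q ^ (-(2 * ((m i : ℤ) + 1)))) * q ^ (-(sumGt i m))
noncomputable def wdn (q : ℝ) (i : Fin n) (m : Fin n → ℕ) : ℝ :=
  Real.sqrt (1 - q ^ (-(2 * (m i : ℤ)))) * q ^ (-(sumGt i m))
noncomputable def wS (q : ℝ) (i : Fin (n+1)) (m : Fin n → ℕ) : ℝ := q ^ (-(2 * sumGe i m))

lemma abs_w0_le (hq : 1 < |q|) (hε : ε = 1 ∨ ε = -1) (m : Fin n → ℕ) :
    |w0 q ε m| ≤ 1 := by
  unfold w0
  rw [abs_mul]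
  have hε1 : |ε| = 1 := by rcases hε with h | h <;> simp [h]
  rw [hε1, one_mul]
  exact q_zpow_le_one hq (by have := sumAll_nonneg m; omega)

lemma sqrt_factor_le_one (q : ℝ) (u : ℤ) :
    Real.sqrt (1 - q ^ (-(2 * u))) ≤ 1 :=
  Real.sqrt_le_one.mpr (one_sub_le_one q u)

lemma abs_wup_le (hq : 1 < |q|) (i : Fin n) (m : Fin n → ℕ) : |wup q i m| ≤ 1 := by
  unfold wup
  rw [abs_mul]
  have h1 : |Real.sqrt (1 - q ^ (-(2 * ((m i : ℤ) + 1))))| ≤ 1 := by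
    rw [abs_of_nonneg (Real.sqrt_nonneg _)]
    exact sqrt_factor_le_one q _
  have h2 : |q ^ (-(sumGt i m))| ≤ 1 :=
    q_zpow_le_one hq (by have := sumGt_nonneg i m; omega)
  calc |Real.sqrt _| * |q ^ (-(sumGt i m))| ≤ 1 * 1 := by
        apply mul_le_mul h1 h2 (abs_nonneg _) zero_le_one
    _ = 1 := by norm_num
  
lemma abs_wdn_le (hq : 1 < |q|) (i : Fin n) (m : Fin n → ℕ) : |wdn q i m| ≤ 1 := by
  unfold wdn
  rw [abs_mul]
  have h1 : |Real.sqrt (1 - q ^ (-(2 * (m i : ℤ))))| ≤ 1 := by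
    rw [abs_of_nonneg (Real.sqrt_nonneg _)]
    exact sqrt_factor_le_one q _
  have h2 : |q ^ (-(sumGt i m))| ≤ 1 :=
    q_zpow_le_one hq (by have := sumGt_nonneg i m; omega)
  calc |Real.sqrt _| * |q ^ (-(sumGt i m))| ≤ 1 * 1 := by
        apply mul_le_mul h1 h2 (abs_nonneg _) zero_le_one
    _ = 1 := by norm_num

lemma abs_wS_le (hq : 1 < |q|) (i : Fin (n+1)) (m : Fin n → ℕ) : |wS q i m| ≤ 1 := by
  unfold wS
  exact q_zpow_le_one hq (by have := sumGe_nonneg i m; omega)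

lemma wdn_eq_zero {q : ℝ} {i : Fin n} {m : Fin n → ℕ} (h : m i = 0) : wdn q i m = 0 := by
  unfold wdn
  rw [h]
  norm_num

lemma q_mul_zpow_neg_succ (hq0 : q ≠ 0) (x : ℤ) :
    q * q ^ (-(x + 1)) = q ^ (-x) := by
  rw [show -x = 1 + (-(x+1)) by ring, zpow_add₀ hq0, zpow_one]

@[simp] lemma upF_apply_self (i : Fin n) (m : Fin n → ℕ) : upF i m i = m i + 1 := by
  simp [upF]
@[simp] lemma upF_apply_ne (i j : Fin n) (m : Fin n → ℕ) (h : j ≠ i) : upF i m j = m j := by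
  simp [upF, Function.update_of_ne h]
@[simp] lemma dnF_apply_self (i : Fin n) (m : Fin n → ℕ) : dnF i m i = m i - 1 := by
  simp [dnF]
@[simp] lemma dnF_apply_ne (i j : Fin n) (m : Fin n → ℕ) (h : j ≠ i) : dnF i m j = m j := by
  simp [dnF, Function.update_of_ne h]

lemma dnF_upF (i : Fin n) (m : Fin n → ℕ) : dnF i (upF i m) = m := by
  funext j
  by_cases h : j = i
  · subst h; simp
  · simp [h]

lemma upF_dnF (i : Fin n) (m : Fin n → ℕ) (h : m i ≠ 0) : upF i (dnF i m) = m := by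
  funext j
  by_cases hj : j = i
  · subst hj
    simp only [upF_apply_self, dnF_apply_self]
    omega
  · simp [hj]

lemma upF_injective (i : Fin n) : Function.Injective (upF i) := by
  intro a b hab
  have := congrArg (dnF i) hab
  rwa [dnF_upF, dnF_upF] at this

lemma upF_comm {i j : Fin n} (h : i ≠ j) (m : Fin n → ℕ) :
    upF i (upF j m) = upF j (upF i m) := by
  funext l
  rcases eq_or_ne l i with rfl | hi
  · rw [upF_apply_self, upF_apply_ne j l m h, upF_apply_ne j l _ h, upF_apply_self]
  · rcases eq_or_ne l j with rfl | hj
    · rw [upF_apply_ne i l _ hi, upF_apply_self, upF_apply_self, upF_apply_ne i l m hi]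
    · rw [upF_apply_ne i l _ hi, upF_apply_ne j l m hj, upF_apply_ne j l _ hj,
        upF_apply_ne i l m hi]

lemma upF_dnF_comm {a b : Fin n} (h : a ≠ b) (m : Fin n → ℕ) :
    upF b (dnF a m) = dnF a (upF b m) := by
  funext l
  rcases eq_or_ne l b with rfl | hb
  · rw [upF_apply_self, dnF_apply_ne a l m (Ne.symm h), dnF_apply_ne a l _ (Ne.symm h),
      upF_apply_self]
  · rcases eq_or_ne l a with rfl | ha
    · rw [upF_apply_ne b l _ hb, dnF_apply_self, dnF_apply_self, upF_apply_ne b l m hb]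
    · rw [upF_apply_ne b l _ hb, dnF_apply_ne a l m ha, dnF_apply_ne a l _ ha,
        upF_apply_ne b l m hb]

/- weight transformation lemmas -/
lemma w0_upF (hq0 : q ≠ 0) (j : Fin n) (m : Fin n → ℕ) :
    w0 q ε m = q * w0 q ε (upF j m) := by
  unfold w0
  rw [sumAll_upF]
  rw [show ε * q ^ (-(sumAll m)) = ε * (q * q ^ (-(sumAll m + 1))) from ?_]
  · ring
  · rw [q_mul_zpow_neg_succ hq0]

lemma w0_dnF (hq0 : q ≠ 0) {a : Fin n} (m : Fin n → ℕ) (h : m a ≠ 0) :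
    w0 q ε (dnF a m) = q * w0 q ε m := by
  unfold w0
  rw [sumAll_dnF m h]
  have h2 : q ^ (-(sumAll m - 1)) = q * q ^ (-(sumAll m)) := by
    rw [show -(sumAll m - 1) = 1 + -(sumAll m) by ring, zpow_add₀ hq0, zpow_one]
  rw [h2]
  ring

lemma wup_upF_of_lt (hq0 : q ≠ 0) {i j : Fin n} (h : i < j) (m : Fin n → ℕ) :
    wup q i m = q * wup q i (upF j m) := by
  unfold wup
  have hne : i ≠ j := ne_of_lt h
  rw [upF_apply_ne j i m hne, sumGt_upF_of_lt h]
  rw [show q * (Real.sqrt (1 - q ^ (-(2 * ((m i : ℤ) + 1)))) * q ^ (-(sumGt i m + 1)))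
      = Real.sqrt (1 - q ^ (-(2 * ((m i : ℤ) + 1)))) * (q * q ^ (-(sumGt i m + 1))) by ring]
  rw [q_mul_zpow_neg_succ hq0]

lemma wup_upF_of_not_lt {i j : Fin n} (hne : i ≠ j) (h : ¬ i < j) (m : Fin n → ℕ) :
    wup q i (upF j m) = wup q i m := by
  unfold wup
  rw [upF_apply_ne j i m hne, sumGt_upF_of_not_lt h]

lemma wup_dnF_of_lt (hq0 : q ≠ 0) {i a : Fin n} (h : i < a) (m : Fin n → ℕ) (ha : m a ≠ 0) :
    wup q i (dnF a m) = q * wup q i m := by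
  unfold wup
  have hne : i ≠ a := ne_of_lt h
  rw [dnF_apply_ne a i m hne, sumGt_dnF_of_lt h m ha]
  have : q * q ^ (-(sumGt i m)) = q ^ (-(sumGt i m - 1)) := by
    rw [show -(sumGt i m) = -((sumGt i m - 1) + 1) by ring, q_mul_zpow_neg_succ hq0]
  rw [← this]
  ring

lemma wup_dnF_of_not_lt {i a : Fin n} (hne : i ≠ a) (h : ¬ i < a) (m : Fin n → ℕ) :
    wup q i (dnF a m) = wup q i m := by
  unfold wup
  rw [dnF_apply_ne a i m hne, sumGt_dnF_of_not_lt h]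

lemma wdn_upF_self (i : Fin n) (m : Fin n → ℕ) : wdn q i (upF i m) = wup q i m := by
  unfold wdn wup
  rw [upF_apply_self, sumGt_upF_of_not_lt (lt_irrefl i)]
  push_cast
  ring_nf

lemma wup_dnF_self {i : Fin n} (m : Fin n → ℕ) (h : m i ≠ 0) :
    wup q i (dnF i m) = wdn q i m := by
  unfold wdn wup
  rw [dnF_apply_self, sumGt_dnF_of_not_lt (lt_irrefl i)]
  have : ((m i - 1 : ℕ) : ℤ) + 1 = (m i : ℤ) := by omega
  rw [this]

lemma wdn_upF_of_lt (hq0 : q ≠ 0) {i b : Fin n} (h : i < b) (m : Fin n → ℕ) :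
    wdn q i m = q * wdn q i (upF b m) := by
  unfold wdn
  have hne : i ≠ b := ne_of_lt h
  rw [upF_apply_ne b i m hne, sumGt_upF_of_lt h]
  rw [show q * (Real.sqrt (1 - q ^ (-(2 * (m i : ℤ)))) * q ^ (-(sumGt i m + 1)))
      = Real.sqrt (1 - q ^ (-(2 * (m i : ℤ)))) * (q * q ^ (-(sumGt i m + 1))) by ring]
  rw [q_mul_zpow_neg_succ hq0]

lemma wdn_upF_of_not_lt {i b : Fin n} (hne : i ≠ b) (h : ¬ i < b) (m : Fin n → ℕ) :
    wdn q i (upF b m) = wdn q i m := by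
  unfold wdn
  rw [upF_apply_ne b i m hne, sumGt_upF_of_not_lt h]

end Weights



section Ops

variable {q ε : ℝ}

lemma wdn_support {i : Fin n} {m : Fin n → ℕ} (h : wdn q i m ≠ 0) : m i ≠ 0 :=
  fun h0 => h (wdn_eq_zero h0)

lemma dnF_injOn (q : ℝ) (i : Fin n) : Set.InjOn (dnF i) {m | wdn q i m ≠ 0} := by
  intro a ha b hb hab
  have ha' := wdn_support ha
  have hb' := wdn_support hb
  have := congrArg (upF i) hab
  rwa [upF_dnF i a ha', upF_dnF i b hb'] at this

noncomputable def X0op (hq : 1 < |q|) (hε : ε = 1 ∨ ε = -1) : ellTwo n →L[ℂ] ellTwo n :=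
  wop (w0 q ε) id (abs_w0_le hq hε) Function.injective_id.injOn

noncomputable def Xup (hq : 1 < |q|) (i : Fin n) : ellTwo n →L[ℂ] ellTwo n :=
  wop (wup q i) (upF i) (abs_wup_le hq i) (upF_injective i).injOn

noncomputable def Xdn (hq : 1 < |q|) (i : Fin n) : ellTwo n →L[ℂ] ellTwo n :=
  wop (wdn q i) (dnF i) (abs_wdn_le hq i) (dnF_injOn q i)

noncomputable def Sop (hq : 1 < |q|) (i : Fin (n + 1)) : ellTwo n →L[ℂ] ellTwo n :=
  wop (wS q i) id (abs_wS_le hq i) Function.injective_id.injOn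

@[simp] lemma X0op_coord (hq : 1 < |q|) (hε : ε = 1 ∨ ε = -1) (f : ellTwo n) (m : Fin n → ℕ) :
    (X0op (n := n) hq hε f) m = (w0 q ε m : ℂ) * f m := rfl
@[simp] lemma Xup_coord (hq : 1 < |q|) (i : Fin n) (f : ellTwo n) (m : Fin n → ℕ) :
    (Xup hq i f) m = (wup q i m : ℂ) * f (upF i m) := rfl
@[simp] lemma Xdn_coord (hq : 1 < |q|) (i : Fin n) (f : ellTwo n) (m : Fin n → ℕ) :
    (Xdn hq i f) m = (wdn q i m : ℂ) * f (dnF i m) := rfl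
@[simp] lemma Sop_coord (hq : 1 < |q|) (i : Fin (n + 1)) (f : ellTwo n) (m : Fin n → ℕ) :
    (Sop hq i f) m = (wS q i m : ℂ) * f m := rfl

lemma coord_mul (A B : ellTwo n →L[ℂ] ellTwo n) (f : ellTwo n) (m : Fin n → ℕ) :
    ((A * B) f) m = (A (B f)) m := rfl
lemma coord_smul (c : ℂ) (A : ellTwo n →L[ℂ] ellTwo n) (f : ellTwo n) (m : Fin n → ℕ) :
    ((c • A) f) m = c * ((A f) m) := by
  rw [ContinuousLinearMap.smul_apply, lp.coeFn_smul, Pi.smul_apply, smul_eq_mul]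
lemma coord_add (A B : ellTwo n →L[ℂ] ellTwo n) (f : ellTwo n) (m : Fin n → ℕ) :
    ((A + B) f) m = (A f) m + (B f) m := by
  rw [ContinuousLinearMap.add_apply, lp.coeFn_add, Pi.add_apply]
lemma coord_sub (A B : ellTwo n →L[ℂ] ellTwo n) (f : ellTwo n) (m : Fin n → ℕ) :
    ((A - B) f) m = (A f) m - (B f) m := by
  rw [ContinuousLinearMap.sub_apply, lp.coeFn_sub, Pi.sub_apply]
lemma coord_one (f : ellTwo n) (m : Fin n → ℕ) :
    ((1 : ellTwo n →L[ℂ] ellTwo n) f) m = f m := rfl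

lemma basisVec_coord (k m : Fin n → ℕ) :
    (basisVec n k) m = if m = k then 1 else 0 := by
  unfold basisVec
  rcases eq_or_ne m k with rfl | h
  · rw [if_pos rfl]
    exact lp.single_apply_self (E := fun _ : Fin n → ℕ => ℂ) 2 m (1 : ℂ)
  · rw [if_neg h]
    exact lp.single_apply_ne (E := fun _ : Fin n → ℕ => ℂ) 2 k (1 : ℂ) h

lemma coord_smul_vec (c : ℂ) (g : ellTwo n) (m : Fin n → ℕ) :
    ((c • g : ellTwo n)) m = c * g m := by
  rw [lp.coeFn_smul, Pi.smul_apply, smul_eq_mul]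

/-- X0 is self-adjoint. -/
lemma X0op_adjoint (hq : 1 < |q|) (hε : ε = 1 ∨ ε = -1) :
    ContinuousLinearMap.adjoint (X0op (n := n) hq hε) = X0op hq hε := by
  refine ((ContinuousLinearMap.eq_adjoint_iff _ _).mpr ?_).symm
  intro f g
  rw [inner_lp, inner_lp]
  apply tsum_congr
  intro m
  rw [X0op_coord, X0op_coord]
  rw [map_mul, Complex.conj_ofReal]
  ring

/-- adjoint of the lowering operator is the raising operator. -/
lemma Xup_adjoint (hq : 1 < |q|) (i : Fin n) :
    ContinuousLinearMap.adjoint (Xup (n := n) hq i) = Xdn hq i := by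
  refine ((ContinuousLinearMap.eq_adjoint_iff _ _).mpr ?_).symm
  intro f g
  rw [inner_lp, inner_lp]
  set F : (Fin n → ℕ) → ℂ := fun m => conj ((wdn q i m : ℂ) * f (dnF i m)) * g m with hF
  have hsupp : Function.support F ⊆ Set.range (upF i) := by
    intro m hm
    have hmi : m i ≠ 0 := by
      intro h0
      apply hm
      rw [hF]
      simp only [wdn_eq_zero h0, Complex.ofReal_zero, zero_mul, map_zero]
    exact ⟨dnF i m, upF_dnF i m hmi⟩
  have key := Function.Injective.tsum_eq (upF_injective i) hsupp
  have hterm : ∀ m, F (upF i m) = conj (f m) * ((wup q i m : ℂ) * g (upF i m)) := by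
    intro m
    rw [hF]
    simp only [dnF_upF, wdn_upF_self]
    rw [map_mul, Complex.conj_ofReal]
    ring
  calc ∑' m, conj ((Xdn hq i f) m) * g m = ∑' m, F m := by
        apply tsum_congr; intro m; rw [Xdn_coord]
    _ = ∑' m, F (upF i m) := key.symm
    _ = ∑' m, conj (f m) * ((wup q i m : ℂ) * g (upF i m)) := tsum_congr hterm
    _ = ∑' m, conj (f m) * (Xup hq i g) m := by
        apply tsum_congr; intro m; rw [Xup_coord]

end Ops


section Scalars

variable {q ε : ℝ}

lemma eps_sq (hε : ε = 1 ∨ ε = -1) : ε * ε = 1 := by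
  rcases hε with rfl | rfl <;> norm_num

lemma wS_zero_eq (hq : 1 < |q|) (hε : ε = 1 ∨ ε = -1) (m : Fin n → ℕ) :
    wS q 0 m = w0 q ε m * w0 q ε m := by
  have hq0 : q ≠ 0 := q_ne_zero hq
  unfold wS w0
  rw [sumGe_zero, show -(2 * sumAll m) = -(sumAll m) + -(sumAll m) by ring, zpow_add₀ hq0]
  calc q ^ (-sumAll m) * q ^ (-sumAll m)
      = (ε * ε) * (q ^ (-sumAll m) * q ^ (-sumAll m)) := by rw [eps_sq hε, one_mul]
    _ = ε * q ^ (-sumAll m) * (ε * q ^ (-sumAll m)) := by ring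

lemma wS_rec_eq (hq : 1 < |q|) (i : Fin n) (m : Fin n → ℕ) :
    wS q i.succ m = wS q i.castSucc m + wdn q i m * wdn q i m := by
  have hq0 : q ≠ 0 := q_ne_zero hq
  unfold wS wdn
  rw [sumGe_succ, sumGe_castSucc]
  have hsq : Real.sqrt (1 - q ^ (-(2 * (m i : ℤ)))) * Real.sqrt (1 - q ^ (-(2 * (m i : ℤ))))
      = 1 - q ^ (-(2 * (m i : ℤ))) :=
    Real.mul_self_sqrt (one_sub_nonneg hq (Int.natCast_nonneg _))
  have h1 : q ^ (-(2 * ((m i : ℤ) + sumGt i m)))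
      = q ^ (-(2 * (m i : ℤ))) * q ^ (-(2 * sumGt i m)) := by
    rw [← zpow_add₀ hq0]; ring_nf
  have h2 : q ^ (-(sumGt i m)) * q ^ (-(sumGt i m)) = q ^ (-(2 * sumGt i m)) := by
    rw [← zpow_add₀ hq0]; ring_nf
  calc q ^ (-(2 * sumGt i m))
      = q ^ (-(2 * (m i : ℤ))) * q ^ (-(2 * sumGt i m))
        + (1 - q ^ (-(2 * (m i : ℤ)))) * q ^ (-(2 * sumGt i m)) := by ring
    _ = q ^ (-(2 * ((m i : ℤ) + sumGt i m)))
        + Real.sqrt (1 - q ^ (-(2 * (m i : ℤ)))) * q ^ (-(sumGt i m))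
          * (Real.sqrt (1 - q ^ (-(2 * (m i : ℤ)))) * q ^ (-(sumGt i m))) := by
        rw [h1]
        congr 1
        rw [show Real.sqrt (1 - q ^ (-(2 * (m i : ℤ)))) * q ^ (-(sumGt i m))
            * (Real.sqrt (1 - q ^ (-(2 * (m i : ℤ)))) * q ^ (-(sumGt i m)))
            = (Real.sqrt (1 - q ^ (-(2 * (m i : ℤ)))) * Real.sqrt (1 - q ^ (-(2 * (m i : ℤ)))))
              * (q ^ (-(sumGt i m)) * q ^ (-(sumGt i m))) by ring, hsq, h2]

lemma q_inv_sq (hq : 1 < |q|) : q⁻¹ ^ 2 = q ^ (-2 : ℤ) := by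
  rw [zpow_neg, inv_pow]
  norm_cast

lemma wcomm_eq (hq : 1 < |q|) (i : Fin n) (m : Fin n → ℕ) :
    wup q i m * wup q i m - wdn q i m * wdn q i m
      = (1 - q⁻¹ ^ 2) * wS q i.castSucc m := by
  have hq0 : q ≠ 0 := q_ne_zero hq
  unfold wup wdn wS
  rw [sumGe_castSucc, q_inv_sq hq]
  have hsq1 : Real.sqrt (1 - q ^ (-(2 * ((m i : ℤ) + 1))))
      * Real.sqrt (1 - q ^ (-(2 * ((m i : ℤ) + 1)))) = 1 - q ^ (-(2 * ((m i : ℤ) + 1))) :=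
    Real.mul_self_sqrt (one_sub_nonneg hq (by have := Int.natCast_nonneg (m i); omega))
  have hsq2 : Real.sqrt (1 - q ^ (-(2 * (m i : ℤ)))) * Real.sqrt (1 - q ^ (-(2 * (m i : ℤ))))
      = 1 - q ^ (-(2 * (m i : ℤ))) :=
    Real.mul_self_sqrt (one_sub_nonneg hq (Int.natCast_nonneg _))
  have h2 : q ^ (-(sumGt i m)) * q ^ (-(sumGt i m)) = q ^ (-(2 * sumGt i m)) := by
    rw [← zpow_add₀ hq0]; ring_nf
  have h3 : q ^ (-(2 * ((m i : ℤ) + 1)))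
      = q ^ (-(2 * (m i : ℤ))) * q ^ (-2 : ℤ) := by
    rw [← zpow_add₀ hq0]; ring_nf
  have h4 : q ^ (-(2 * ((m i : ℤ) + sumGt i m)))
      = q ^ (-(2 * (m i : ℤ))) * q ^ (-(2 * sumGt i m)) := by
    rw [← zpow_add₀ hq0]; ring_nf
  calc Real.sqrt (1 - q ^ (-(2 * ((m i : ℤ) + 1)))) * q ^ (-(sumGt i m))
        * (Real.sqrt (1 - q ^ (-(2 * ((m i : ℤ) + 1)))) * q ^ (-(sumGt i m)))
      - Real.sqrt (1 - q ^ (-(2 * (m i : ℤ)))) * q ^ (-(sumGt i m))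
        * (Real.sqrt (1 - q ^ (-(2 * (m i : ℤ)))) * q ^ (-(sumGt i m)))
      = (Real.sqrt (1 - q ^ (-(2 * ((m i : ℤ) + 1)))) * Real.sqrt (1 - q ^ (-(2 * ((m i : ℤ) + 1)))))
          * (q ^ (-(sumGt i m)) * q ^ (-(sumGt i m)))
        - (Real.sqrt (1 - q ^ (-(2 * (m i : ℤ)))) * Real.sqrt (1 - q ^ (-(2 * (m i : ℤ)))))
          * (q ^ (-(sumGt i m)) * q ^ (-(sumGt i m))) := by ring
    _ = (1 - q ^ (-(2 * ((m i : ℤ) + 1)))) * (q ^ (-(sumGt i m)) * q ^ (-(sumGt i m)))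
        - (1 - q ^ (-(2 * (m i : ℤ)))) * (q ^ (-(sumGt i m)) * q ^ (-(sumGt i m))) := by
        rw [hsq1, hsq2]
    _ = (1 - q ^ (-(2 * (m i : ℤ))) * q ^ (-2 : ℤ)) * q ^ (-(2 * sumGt i m))
        - (1 - q ^ (-(2 * (m i : ℤ)))) * q ^ (-(2 * sumGt i m)) := by rw [h2, h3]
    _ = (1 - q ^ (-2 : ℤ)) * (q ^ (-(2 * (m i : ℤ))) * q ^ (-(2 * sumGt i m))) := by ring
    _ = (1 - q ^ (-2 : ℤ)) * q ^ (-(2 * ((m i : ℤ) + sumGt i m))) := by rw [h4]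

lemma wS_last_eq (q : ℝ) (m : Fin n → ℕ) : wS q (Fin.last n) m = 1 := by
  unfold wS
  rw [sumGe_last]
  norm_num

end Scalars

end EvenSphereAux

open EvenSphereAux

/-- The irreducible representations `ψ_±^{(2n)}` of the quantum Euclidean sphere
`S_q^{2n}` (`|q| > 1`, sign `ε = ±1`): there are bounded operators `X₀, …, Xₙ` on
`ℓ²(ℕⁿ)` acting on the standard basis by the stated formulas, with the stated
adjoints, satisfying the defining relations of `S_q^{2n}`. -/
theorem even_sphere_representation
    (q : ℝ) (hq : 1 < |q|) (n : ℕ) (hn : 1 ≤ n) (ε : ℝ) (hε : ε = 1 ∨ ε = -1) :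
    ∃ X : Fin (n + 1) → (ellTwo n →L[ℂ] ellTwo n),
      (∀ k : Fin n → ℕ,
        X 0 (basisVec n k)
          = ((ε * q ^ (-(∑ j : Fin n, (k j : ℤ))) : ℝ) : ℂ) • basisVec n k) ∧
      (∀ (i : Fin n) (k : Fin n → ℕ),
        X i.succ (basisVec n k)
          = ((Real.sqrt (1 - q ^ (-(2 * (k i : ℤ))))
              * q ^ (-(∑ j ∈ Finset.univ.filter (fun j => i < j), (k j : ℤ))) : ℝ) : ℂ) •
              basisVec n (Function.update k i (k i - 1))) ∧
      ContinuousLinearMap.adjoint (X 0) = X 0 ∧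
      (∀ (i : Fin n) (k : Fin n → ℕ),
        ContinuousLinearMap.adjoint (X i.succ) (basisVec n k)
          = ((Real.sqrt (1 - q ^ (-(2 * ((k i : ℤ) + 1))))
              * q ^ (-(∑ j ∈ Finset.univ.filter (fun j => i < j), (k j : ℤ))) : ℝ) : ℂ) •
              basisVec n (Function.update k i (k i + 1))) ∧
      (∀ i j : Fin (n + 1), i < j → X i * X j = (q : ℂ) • (X j * X i)) ∧
      (∀ i j : Fin (n + 1), i ≠ j →
        ContinuousLinearMap.adjoint (X i) * X j
          = (q : ℂ) • (X j * ContinuousLinearMap.adjoint (X i))) ∧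
      ∃ S : Fin (n + 1) → (ellTwo n →L[ℂ] ellTwo n),
        S 0 = X 0 * X 0 ∧
        (∀ i : Fin n,
          S i.succ = S i.castSucc + ContinuousLinearMap.adjoint (X i.succ) * X i.succ) ∧
        (∀ i : Fin n,
          X i.succ * ContinuousLinearMap.adjoint (X i.succ)
              - ContinuousLinearMap.adjoint (X i.succ) * X i.succ
            = ((1 - q⁻¹ ^ 2 : ℝ) : ℂ) • S i.castSucc) ∧
        S (Fin.last n) = 1 := by
  have hq0 : q ≠ 0 := q_ne_zero hq
  -- relation lemmas
  have hrel0 : ∀ b : Fin n,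
      X0op (n := n) hq hε * Xup hq b = (q : ℂ) • (Xup hq b * X0op hq hε) := by
    intro b
    apply op_ext
    intro f m
    rw [coord_mul, coord_smul, coord_mul, X0op_coord, Xup_coord, Xup_coord, X0op_coord]
    have hr : w0 q ε m * wup q b m = q * (wup q b m * w0 q ε (upF b m)) := by
      rw [w0_upF hq0 b m]; ring
    calc (w0 q ε m : ℂ) * ((wup q b m : ℂ) * f (upF b m))
        = ((w0 q ε m * wup q b m : ℝ) : ℂ) * f (upF b m) := by push_cast; ring
      _ = ((q * (wup q b m * w0 q ε (upF b m)) : ℝ) : ℂ) * f (upF b m) := by rw [hr]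
      _ = (q : ℂ) * ((wup q b m : ℂ) * ((w0 q ε (upF b m) : ℂ) * f (upF b m))) := by
          push_cast; ring
  have hrelsucc : ∀ a b : Fin n, a < b →
      Xup (n := n) hq a * Xup hq b = (q : ℂ) • (Xup hq b * Xup hq a) := by
    intro a b hab
    have hne : a ≠ b := ne_of_lt hab
    apply op_ext
    intro f m
    rw [coord_mul, coord_smul, coord_mul, Xup_coord, Xup_coord, Xup_coord, Xup_coord]
    rw [upF_comm (Ne.symm hne) m]
    have hr : wup q a m * wup q b (upF a m) = q * (wup q b m * wup q a (upF b m)) := by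
      rw [wup_upF_of_not_lt (Ne.symm hne) (by exact fun h => absurd (lt_trans hab h) (lt_irrefl a)) m,
        wup_upF_of_lt hq0 hab m]
      ring
    calc (wup q a m : ℂ) * ((wup q b (upF a m) : ℂ) * f (upF a (upF b m)))
        = ((wup q a m * wup q b (upF a m) : ℝ) : ℂ) * f (upF a (upF b m)) := by push_cast; ring
      _ = ((q * (wup q b m * wup q a (upF b m)) : ℝ) : ℂ) * f (upF a (upF b m)) := by rw [hr]
      _ = (q : ℂ) * ((wup q b m : ℂ) * ((wup q a (upF b m) : ℂ) * f (upF a (upF b m)))) := by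
          push_cast; ring
  have hstar0 : ∀ a : Fin n,
      Xdn (n := n) hq a * X0op hq hε = (q : ℂ) • (X0op hq hε * Xdn hq a) := by
    intro a
    apply op_ext
    intro f m
    rw [coord_mul, coord_smul, coord_mul, Xdn_coord, X0op_coord, X0op_coord, Xdn_coord]
    by_cases hma : m a = 0
    · rw [wdn_eq_zero hma]
      push_cast
      ring
    · have hr : wdn q a m * w0 q ε (dnF a m) = q * (w0 q ε m * wdn q a m) := by
        rw [w0_dnF hq0 m hma]; ring
      calc (wdn q a m : ℂ) * ((w0 q ε (dnF a m) : ℂ) * f (dnF a m))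
          = ((wdn q a m * w0 q ε (dnF a m) : ℝ) : ℂ) * f (dnF a m) := by push_cast; ring
        _ = ((q * (w0 q ε m * wdn q a m) : ℝ) : ℂ) * f (dnF a m) := by rw [hr]
        _ = (q : ℂ) * ((w0 q ε m : ℂ) * ((wdn q a m : ℂ) * f (dnF a m))) := by push_cast; ring
  have hstarsucc : ∀ a b : Fin n, a ≠ b →
      Xdn (n := n) hq a * Xup hq b = (q : ℂ) • (Xup hq b * Xdn hq a) := by
    intro a b hab
    apply op_ext
    intro f m
    rw [coord_mul, coord_smul, coord_mul, Xdn_coord, Xup_coord, Xup_coord, Xdn_coord]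
    rw [upF_dnF_comm hab m]
    by_cases hma : m a = 0
    · have h2 : (upF b m) a = 0 := by rw [upF_apply_ne b a m hab]; exact hma
      rw [wdn_eq_zero hma, wdn_eq_zero h2]
      push_cast
      ring
    · have hr : wdn q a m * wup q b (dnF a m) = q * (wup q b m * wdn q a (upF b m)) := by
        rcases lt_or_gt_of_ne hab with h | h
        · rw [wup_dnF_of_not_lt (Ne.symm hab) (by exact fun hc => absurd (lt_trans h hc) (lt_irrefl _)) m,
            wdn_upF_of_lt hq0 h m]
          ring
        · rw [wup_dnF_of_lt hq0 h m hma, wdn_upF_of_not_lt hab (by exact fun hc => absurd (lt_trans h hc) (lt_irrefl _)) m]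
          ring
      calc (wdn q a m : ℂ) * ((wup q b (dnF a m) : ℂ) * f (dnF a (upF b m)))
          = ((wdn q a m * wup q b (dnF a m) : ℝ) : ℂ) * f (dnF a (upF b m)) := by push_cast; ring
        _ = ((q * (wup q b m * wdn q a (upF b m)) : ℝ) : ℂ) * f (dnF a (upF b m)) := by rw [hr]
        _ = (q : ℂ) * ((wup q b m : ℂ) * ((wdn q a (upF b m) : ℂ) * f (dnF a (upF b m)))) := by
            push_cast; ring
  refine ⟨fun a => Fin.cases (X0op hq hε) (fun i => Xup hq i) a,
    ?_, ?_, ?_, ?_, ?_, ?_, ?_⟩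
  · -- action of X 0 on basis
    intro k
    simp only [Fin.cases_zero]
    show X0op hq hε (basisVec n k) = ((w0 q ε k : ℝ) : ℂ) • basisVec n k
    apply lp.ext
    funext m
    rw [X0op_coord, coord_smul_vec, basisVec_coord]
    rcases eq_or_ne m k with rfl | h
    · rw [if_pos rfl]
    · rw [if_neg h, mul_zero, mul_zero]
  · -- action of X i.succ on basis
    intro i k
    simp only [Fin.cases_succ]
    show Xup hq i (basisVec n k) = ((wdn q i k : ℝ) : ℂ) • basisVec n (dnF i k)
    apply lp.ext
    funext m
    rw [Xup_coord, coord_smul_vec, basisVec_coord, basisVec_coord]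
    by_cases hki : k i = 0
    · have h1 : upF i m ≠ k := by
        intro h
        have := congrFun h i
        rw [upF_apply_self] at this
        omega
      rw [if_neg h1, mul_zero, wdn_eq_zero hki]
      push_cast
      ring
    · by_cases hm : m = dnF i k
      · subst hm
        rw [if_pos (upF_dnF i k hki), if_pos rfl, mul_one, mul_one, wup_dnF_self k hki]
      · have h1 : upF i m ≠ k := by
          intro h
          apply hm
          have := congrArg (dnF i) h
          rwa [dnF_upF] at this
        rw [if_neg h1, if_neg hm, mul_zero, mul_zero]
  · -- X 0 self-adjoint
    simp only [Fin.cases_zero]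
    exact X0op_adjoint hq hε
  · -- adjoint action on basis
    intro i k
    simp only [Fin.cases_succ]
    rw [Xup_adjoint hq i]
    show Xdn hq i (basisVec n k) = ((wup q i k : ℝ) : ℂ) • basisVec n (upF i k)
    apply lp.ext
    funext m
    rw [Xdn_coord, coord_smul_vec, basisVec_coord, basisVec_coord]
    by_cases hm : m = upF i k
    · subst hm
      rw [if_pos (dnF_upF i k), if_pos rfl, mul_one, mul_one, wdn_upF_self]
    · rw [if_neg hm]
      by_cases hd : dnF i m = k
      · by_cases hmi : m i = 0
        · rw [wdn_eq_zero hmi]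
          push_cast
          ring
        · exfalso
          apply hm
          rw [← hd, upF_dnF i m hmi]
      · rw [if_neg hd, mul_zero, mul_zero]
  · -- commutation X_i X_j = q X_j X_i
    intro i j hij
    rcases Fin.eq_zero_or_eq_succ i with rfl | ⟨a, rfl⟩ <;>
      rcases Fin.eq_zero_or_eq_succ j with rfl | ⟨b, rfl⟩
    · exact absurd hij (lt_irrefl _)
    · simp only [Fin.cases_zero, Fin.cases_succ]
      exact hrel0 b
    · exact absurd hij (by simp)
    · simp only [Fin.cases_succ]
      exact hrelsucc a b (by rwa [Fin.succ_lt_succ_iff] at hij)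
  · -- star relations
    intro i j hij
    rcases Fin.eq_zero_or_eq_succ i with rfl | ⟨a, rfl⟩ <;>
      rcases Fin.eq_zero_or_eq_succ j with rfl | ⟨b, rfl⟩
    · exact absurd rfl hij
    · simp only [Fin.cases_zero, Fin.cases_succ]
      rw [X0op_adjoint hq hε]
      exact hrel0 b
    · simp only [Fin.cases_zero, Fin.cases_succ]
      rw [Xup_adjoint hq a]
      exact hstar0 a
    · simp only [Fin.cases_succ]
      rw [Xup_adjoint hq a]
      exact hstarsucc a b (fun h => hij (by rw [h]))
  · -- the S operators
    refine ⟨fun i => Sop hq i, ?_, ?_, ?_, ?_⟩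
    · simp only [Fin.cases_zero]
      apply op_ext
      intro f m
      rw [Sop_coord, coord_mul, X0op_coord, X0op_coord]
      have hr := wS_zero_eq (n := n) hq hε m
      calc (wS q 0 m : ℂ) * f m = ((w0 q ε m * w0 q ε m : ℝ) : ℂ) * f m := by rw [← hr]
        _ = (w0 q ε m : ℂ) * ((w0 q ε m : ℂ) * f m) := by push_cast; ring
    · intro i
      simp only [Fin.cases_succ]
      rw [Xup_adjoint hq i]
      apply op_ext
      intro f m
      rw [coord_add, Sop_coord, Sop_coord, coord_mul, Xdn_coord, Xup_coord]
      have hr := wS_rec_eq (n := n) hq i m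
      by_cases hmi : m i = 0
      · rw [wdn_eq_zero hmi] at hr ⊢
        rw [mul_zero, add_zero] at hr
        rw [hr]
        push_cast
        ring
      · rw [upF_dnF i m hmi, wup_dnF_self m hmi]
        calc (wS q i.succ m : ℂ) * f m
            = ((wS q i.castSucc m + wdn q i m * wdn q i m : ℝ) : ℂ) * f m := by rw [← hr]
          _ = (wS q i.castSucc m : ℂ) * f m + (wdn q i m : ℂ) * ((wdn q i m : ℂ) * f m) := by
              push_cast; ring
    · intro i
      simp only [Fin.cases_succ]
      rw [Xup_adjoint hq i]
      apply op_ext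
      intro f m
      rw [coord_sub, coord_mul, coord_mul, coord_smul, Sop_coord,
        Xup_coord, Xdn_coord, Xdn_coord, Xup_coord]
      rw [dnF_upF i m, wdn_upF_self]
      have hr := wcomm_eq (n := n) hq i m
      by_cases hmi : m i = 0
      · rw [wdn_eq_zero hmi] at hr ⊢
        rw [mul_zero, sub_zero] at hr
        calc (wup q i m : ℂ) * ((wup q i m : ℂ) * f m) - (0 : ℝ) * ((wup q i (dnF i m) : ℂ) * f (upF i (dnF i m)))
            = ((wup q i m * wup q i m : ℝ) : ℂ) * f m := by push_cast; ring
          _ = (((1 - q⁻¹ ^ 2) * wS q i.castSucc m : ℝ) : ℂ) * f m := by rw [hr]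
          _ = ((1 - q⁻¹ ^ 2 : ℝ) : ℂ) * ((wS q i.castSucc m : ℂ) * f m) := by push_cast; ring
      · rw [upF_dnF i m hmi, wup_dnF_self m hmi]
        calc (wup q i m : ℂ) * ((wup q i m : ℂ) * f m) - (wdn q i m : ℂ) * ((wdn q i m : ℂ) * f m)
            = ((wup q i m * wup q i m - wdn q i m * wdn q i m : ℝ) : ℂ) * f m := by
              push_cast; ring
          _ = (((1 - q⁻¹ ^ 2) * wS q i.castSucc m : ℝ) : ℂ) * f m := by rw [hr]
          _ = ((1 - q⁻¹ ^ 2 : ℝ) : ℂ) * ((wS q i.castSucc m : ℂ) * f m) := by push_cast; ring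
    · apply op_ext
      intro f m
      rw [Sop_coord, wS_last_eq, coord_one]
      push_cast
      ring
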